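/- Let (V, M) be a valuation domain with residue field k and fraction field K, let π : V → k be the residue map, and let D be an integral domain that is a subring of k. Then every (D ×_k V)-submodule of K is comparable with V with respect to inclusion: for every π⁻¹(D)-submodule N of K, either N ⊆ V or V ⊆ N. -/

import Mathlib

/-- Let `(V, M)` be a valuation domain with residue field `k`, residue map `π`, and
fraction field `K`, and let `D` be an integral domain that is a subring of `k`. Then every
`π⁻¹(D)`-submodule of `K` is comparable with `V` with respect to inclusion. -/
theorem stmt_7 {V K k : Type*} [CommRing V] [IsDomain V] [ValuationRing V]
    [Field K] [Algebra V K] [IsFractionRing V K] [Field k]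
    (π : V →+* k) (hπ : Function.Surjective π)
    (hker : RingHom.ker π = IsLocalRing.maximalIdeal V)
    (D : Subring k) :
    ∀ N : Submodule (D.comap π) K,
      (N : Set K) ⊆ Set.range (algebraMap V K) ∨ Set.range (algebraMap V K) ⊆ (N : Set K) := by
  intro N
  by_cases h : (N : Set K) ⊆ Set.range (algebraMap V K)
  · exact Or.inl h
  right
  obtain ⟨x, hxN, hx⟩ := Set.not_subset.mp h
  have hx0 : x ≠ 0 := by rintro rfl; exact hx ⟨0, by simp⟩
  rintro _ ⟨v, rfl⟩
  -- x⁻¹ is integral over V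
  obtain hcase | ⟨u, hu⟩ := ValuationRing.isInteger_or_isInteger V x
  · exact absurd hcase hx
  -- u is not a unit
  have hu_nonunit : ¬ IsUnit u := by
    intro huu
    obtain ⟨w, hw⟩ := huu.exists_right_inv
    apply hx
    refine ⟨w, ?_⟩
    have : algebraMap V K u * algebraMap V K w = 1 := by
      rw [← map_mul, hw, map_one]
    rw [hu] at this
    field_simp at this
    linear_combination this
  have hvu : v * u ∈ IsLocalRing.maximalIdeal V :=
    Ideal.mul_mem_left _ v (hu_nonunit)
  have hmem : v * u ∈ D.comap π := by
    rw [← hker] at hvu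
    simp only [Subring.mem_comap]
    rw [RingHom.mem_ker] at hvu
    rw [hvu]; exact zero_mem D
  have := N.smul_mem (⟨v * u, hmem⟩ : D.comap π) hxN
  have hsmul : (⟨v * u, hmem⟩ : D.comap π) • x = algebraMap V K v := by
    show (v * u) • x = algebraMap V K v
    rw [Algebra.smul_def, map_mul, hu]
    field_simp
  rwa [hsmul] at this
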